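/- arXiv:1208.4150 — 2 statements merged into one kernel-verified Lean document; each statement's English description precedes it below -/
import Mathlib

section
/- If I ⊆ [0,1] satisfies the DCC then I_+ = {0} ∪ { sums of finitely many elements of I that lie in [0,1] } also satisfies the DCC. -/
/-- A set `S` satisfies the DCC if it contains no infinite strictly decreasing
sequence. -/
def HasDCC (S : Set ℝ) : Prop := ¬ ∃ f : ℕ → ℝ, (∀ n, f n ∈ S) ∧ StrictAnti f

/-- `I_+` is `{0}` together with all finite sums of elements of `I`
lying in `[0,1]`. -/
def Iplus (I : Set ℝ) : Set ℝ :=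
  {0} ∪ { j : ℝ | j ∈ Set.Icc (0:ℝ) 1 ∧
    ∃ l : List ℝ, l ≠ [] ∧ (∀ x ∈ l, x ∈ I) ∧ l.sum = j }

open Pointwise in
lemma hasDCC_iff_isWF (S : Set ℝ) : HasDCC S ↔ S.IsWF := by
  rw [Set.isWF_iff_no_descending_seq]
  constructor
  · intro H f hf hm
    exact H ⟨f, fun n => hm n, hf⟩
  · rintro H ⟨f, hm, hf⟩
    exact H f hf (fun n => hm n)

open Pointwise

/-- Iterated sumsets: `sumIter I k` contains sums of at most `k` elements of `I`. -/
def sumIter (I : Set ℝ) : ℕ → Set ℝ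
  | 0 => {0}
  | k + 1 => sumIter I k ∪ (I + sumIter I k)

lemma sumIter_isWF {I : Set ℝ} (hI : I.IsWF) : ∀ k, (sumIter I k).IsWF := by
  intro k
  induction k with
  | zero => exact Set.Finite.isWF (Set.finite_singleton 0)
  | succ k ih => exact ih.union (hI.add ih)

lemma sumIter_mono {I : Set ℝ} {k : ℕ} : sumIter I k ⊆ sumIter I (k + 1) :=
  Set.subset_union_left

lemma zero_mem_sumIter (I : Set ℝ) (k : ℕ) : (0 : ℝ) ∈ sumIter I k := by
  induction k with
  | zero => exact rfl
  | succ k ih => exact Or.inl ih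

lemma sum_mem_sumIter {I : Set ℝ} :
    ∀ (l : List ℝ), (∀ x ∈ l, x ∈ I ∪ {0}) → ∀ k, l.countP (fun x => x ≠ 0) ≤ k →
      l.sum ∈ sumIter (I \ {0}) k := by
  intro l
  induction l with
  | nil => intro _ k _; simpa using zero_mem_sumIter _ k
  | cons a t ih =>
    intro hmem k hc
    rw [List.sum_cons]
    by_cases ha : a = 0
    · subst ha
      rw [zero_add]
      apply ih (fun x hx => hmem x (List.mem_cons_of_mem _ hx)) k
      refine le_trans ?_ hc
      rw [List.countP_cons]
      simp
    · rw [List.countP_cons] at hc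
      have h1 : (if (fun x => decide (x ≠ (0:ℝ))) a = true then 1 else 0) = 1 := by simp [ha]
      rw [h1] at hc
      obtain ⟨k', rfl⟩ : ∃ k', k = k' + 1 := ⟨k - 1, by omega⟩
      have haI : a ∈ I \ {0} := by
        have := hmem a (List.mem_cons_self)
        rcases this with hI | h0
        · exact ⟨hI, ha⟩
        · exact absurd h0 ha
      refine Or.inr ⟨a, haI, t.sum, ?_, rfl⟩
      exact ih (fun x hx => hmem x (List.mem_cons_of_mem _ hx)) k' (by omega)

lemma countP_nsmul_le_sum {a₀ : ℝ} (ha₀ : 0 < a₀) :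
    ∀ (l : List ℝ), (∀ x ∈ l, 0 ≤ x ∧ (x ≠ 0 → a₀ ≤ x)) →
      (l.countP (fun x => x ≠ 0) : ℝ) * a₀ ≤ l.sum := by
  intro l
  induction l with
  | nil => simp
  | cons a t ih =>
    intro hmem
    have ht := ih (fun x hx => hmem x (List.mem_cons_of_mem _ hx))
    rw [List.countP_cons, List.sum_cons]
    by_cases ha : a = 0
    · subst ha
      have h0 : (if (fun x => decide (x ≠ (0:ℝ))) (0:ℝ) = true then 1 else 0) = 0 := by simp
      rw [h0]
      simpa using ht
    · have h1 : (if (fun x => decide (x ≠ (0:ℝ))) a = true then 1 else 0) = 1 := by simp [ha]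
      rw [h1]
      push_cast
      have := (hmem a (List.mem_cons_self)).2 ha
      nlinarith [ht]

/-- If `I ⊆ [0,1]` satisfies the DCC, then so does `I_+`. -/
theorem Iplus_dcc (I : Set ℝ) (hI : I ⊆ Set.Icc 0 1) (h : HasDCC I) :
    HasDCC (Iplus I) := by
  rw [hasDCC_iff_isWF] at h ⊢
  set I' : Set ℝ := I \ {0} with hI'
  by_cases hne : I'.Nonempty
  · have hI'wf : I'.IsWF := h.mono Set.diff_subset
    set a₀ : ℝ := hI'wf.min hne with ha₀def
    have ha₀mem : a₀ ∈ I' := hI'wf.min_mem hne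
    have ha₀pos : 0 < a₀ := by
      have h1 := (hI ha₀mem.1).1
      have h2 : a₀ ≠ 0 := ha₀mem.2
      exact lt_of_le_of_ne h1 (Ne.symm h2)
    set N : ℕ := ⌈1 / a₀⌉₊ with hN
    have hsub : Iplus I ⊆ sumIter I' N := by
      rintro j (rfl | ⟨⟨hj0, hj1⟩, l, hlne, hlmem, rfl⟩)
      · exact zero_mem_sumIter _ N
      · have hmem' : ∀ x ∈ l, x ∈ I ∪ {0} := fun x hx => Or.inl (hlmem x hx)
        apply sum_mem_sumIter l hmem' N
        have hbound : (l.countP (fun x => x ≠ 0) : ℝ) * a₀ ≤ l.sum := by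
          apply countP_nsmul_le_sum ha₀pos
          intro x hx
          refine ⟨(hI (hlmem x hx)).1, fun hx0 => ?_⟩
          exact hI'wf.min_le hne ⟨hlmem x hx, hx0⟩
        have h1 : (l.countP (fun x => x ≠ 0) : ℝ) ≤ 1 / a₀ := by
          rw [le_div_iff₀ ha₀pos]
          exact hbound.trans hj1
        have h2 : (1 / a₀ : ℝ) ≤ N := Nat.le_ceil _
        exact_mod_cast h1.trans h2
    exact (sumIter_isWF hI'wf N).mono hsub
  · have hsub : Iplus I ⊆ {0} := by
      rintro j (rfl | ⟨_, l, _, hlmem, rfl⟩)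
      · rfl
      · have : ∀ x ∈ l, x = (0:ℝ) := by
          intro x hx
          by_contra hx0
          exact hne ⟨x, hlmem x hx, hx0⟩
        simp [List.sum_eq_zero this]
    exact (Set.Finite.isWF (Set.finite_singleton 0)).mono hsub
end

section
/- Let I ⊆ [0,1] satisfy the DCC and let J_0 ⊆ [0,1] be a finite set. Then the set I_0 of all c ∈ I such that (m - 1 + f + k c)/m ∈ J_0 for some positive integers k, m and some f ∈ D(I) is finite. -/
/-- `D(I) = { a ≤ 1 : a = (m-1+f)/m, m ∈ ℕ_{≥1}, f ∈ I_+ }`. -/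
def DSet (I : Set ℝ) : Set ℝ :=
  { a : ℝ | a ≤ 1 ∧ ∃ m : ℕ, 1 ≤ m ∧ ∃ f ∈ Iplus I, a = ((m : ℝ) - 1 + f) / m }

/-- Extract a strictly monotone sequence landing in an infinite subset of ℕ. -/
lemma exists_strictMono_mem {A : Set ℕ} (hA : A.Infinite) :
    ∃ φ : ℕ → ℕ, StrictMono φ ∧ ∀ n, φ n ∈ A := by
  classical
  haveI := hA.to_subtype
  refine ⟨Nat.orderEmbeddingOfSet A, (Nat.orderEmbeddingOfSet A).strictMono, fun n => ?_⟩
  have : (Nat.orderEmbeddingOfSet A) n ∈ Set.range (Nat.orderEmbeddingOfSet A) :=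
    Set.mem_range_self n
  rwa [Nat.orderEmbeddingOfSet_range A] at this

/-- Infinite pigeonhole along a subsequence. -/
lemma pigeonhole_subseq {β : Type*} [Finite β] (v : ℕ → β) :
    ∃ b : β, ∃ φ : ℕ → ℕ, StrictMono φ ∧ ∀ n, v (φ n) = b := by
  obtain ⟨b, hb⟩ := Finite.exists_infinite_fiber v
  have hinf : (v ⁻¹' {b}).Infinite := Set.infinite_coe_iff.mp hb
  obtain ⟨φ, hφ, hmem⟩ := exists_strictMono_mem hinf
  exact ⟨b, φ, hφ, fun n => hmem n⟩

lemma Iplus_nonneg {I : Set ℝ} {f : ℝ} (hf : f ∈ Iplus I) : 0 ≤ f := by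
  rcases hf with h | ⟨h, -⟩
  · simp_all
  · exact h.1

lemma DSet_nonneg {I : Set ℝ} {f : ℝ} (hf : f ∈ DSet I) : 0 ≤ f := by
  obtain ⟨-, m, hm, g, hg, rfl⟩ := hf
  have hm' : (1:ℝ) ≤ (m:ℝ) := by exact_mod_cast hm
  have hg' := Iplus_nonneg hg
  apply div_nonneg (by linarith) (by linarith)

lemma Iplus_isPWO {I : Set ℝ} (hI : I ⊆ Set.Icc 0 1) (h : I.IsPWO) : (Iplus I).IsPWO := by
  have h1 : Set.IsPWO (AddSubmonoid.closure I : Set ℝ) :=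
    h.addSubmonoid_closure (fun x hx => (hI hx).1)
  refine h1.mono ?_
  rintro x (rfl | ⟨-, l, -, hl, rfl⟩)
  · exact (AddSubmonoid.closure I).zero_mem
  · exact list_sum_mem (fun x hx => AddSubmonoid.subset_closure (hl x hx))

lemma isWF_of_no_anti {S : Set ℝ} (h : ¬ ∃ f : ℕ → ℝ, (∀ n, f n ∈ S) ∧ StrictAnti f) :
    S.IsWF := by
  rw [Set.isWF_iff_no_descending_seq]
  intro f hf hmem
  exact h ⟨f, fun n => hmem n, hf⟩

/-- No strictly decreasing sequence in `DSet I`. -/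
lemma DSet_no_anti {I : Set ℝ} (hI : I ⊆ Set.Icc 0 1) (hplus : (Iplus I).IsWF) :
    ¬ ∃ a : ℕ → ℝ, (∀ n, a n ∈ DSet I) ∧ StrictAnti a := by
  rintro ⟨a, ha, hanti⟩
  set t := a 1 with ht_def
  have ht1 : t < 1 := lt_of_lt_of_le (hanti (by norm_num : (0:ℕ) < 1)) (ha 0).1
  -- representation data for the shifted sequence
  have hrep : ∀ n : ℕ, ∃ m : ℕ, 1 ≤ m ∧ ∃ f ∈ Iplus I, a (n + 1) = ((m : ℝ) - 1 + f) / m :=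
    fun n => (ha (n + 1)).2
  choose m hm f hf hafm using hrep
  -- bound on m
  set N : ℕ := ⌈1 / (1 - t)⌉₊ with hN
  have hmN : ∀ n, m n ≤ N := by
    intro n
    have hmpos : (1:ℝ) ≤ (m n : ℝ) := by exact_mod_cast hm n
    have hfn := Iplus_nonneg (hf n)
    have hle : a (n + 1) ≤ t := by
      rcases Nat.eq_zero_or_pos n with rfl | hn
      · simp [ht_def]
      · exact le_of_lt (hanti (by omega : 1 < n + 1))
    have key : ((m n : ℝ) - 1) / m n ≤ t := by
      refine le_trans ?_ hle
      rw [hafm n]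
      apply div_le_div_of_nonneg_right (by linarith) (by linarith)
    have h1t : (0:ℝ) < 1 - t := by linarith
    have : (m n : ℝ) * (1 - t) ≤ 1 := by
      have := (div_le_iff₀ (by linarith : (0:ℝ) < (m n : ℝ))).mp key
      nlinarith
    have : (m n : ℝ) ≤ 1 / (1 - t) := by
      rw [le_div_iff₀ h1t]; linarith
    calc m n ≤ ⌈(m n : ℝ)⌉₊ := by rw [Nat.ceil_natCast]
      _ ≤ N := Nat.ceil_le_ceil this
  -- pigeonhole on m
  have : ∃ b : Fin (N + 1), ∃ φ : ℕ → ℕ, StrictMono φ ∧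
      ∀ n, (⟨m (φ n), Nat.lt_succ_of_le (hmN (φ n))⟩ : Fin (N+1)) = b := by
    obtain ⟨b, φ, hφ, hb⟩ := pigeonhole_subseq (fun n => (⟨m n, Nat.lt_succ_of_le (hmN n)⟩ : Fin (N+1)))
    exact ⟨b, φ, hφ, hb⟩
  obtain ⟨b, φ, hφ, hb⟩ := this
  have hmb : ∀ n, m (φ n) = (b : ℕ) := fun n => congrArg Fin.val (hb n)
  have hb1 : 1 ≤ (b : ℕ) := (hmb 0) ▸ hm (φ 0)
  have hbR : (1:ℝ) ≤ ((b : ℕ) : ℝ) := by exact_mod_cast hb1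
  -- f along the subsequence is strictly decreasing in Iplus I
  have hformula : ∀ n, f (φ n) = ((b:ℕ):ℝ) * a (φ n + 1) - (((b:ℕ):ℝ) - 1) := by
    intro n
    have := hafm (φ n)
    rw [hmb n] at this
    field_simp at this
    linarith
  have : ∃ g : ℕ → ℝ, StrictAnti g ∧ ∀ n, g n ∈ Iplus I := by
    refine ⟨fun n => f (φ n), ?_, fun n => hf (φ n)⟩
    intro p q hpq
    show f (φ q) < f (φ p)
    rw [hformula p, hformula q]
    have : a (φ q + 1) < a (φ p + 1) := hanti (by have := hφ hpq; omega)
    nlinarith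
  obtain ⟨g, hg, hgmem⟩ := this
  rw [Set.isWF_iff_no_descending_seq] at hplus
  exact hplus g hg (fun n => hgmem n)

/-- key final step: constant total `f + k c = t` with `c` strictly increasing forces
a strictly decreasing sequence in `DSet I`. -/
lemma final_step {I : Set ℝ} (hI : I ⊆ Set.Icc 0 1)
    (hnoD : ¬ ∃ a : ℕ → ℝ, (∀ n, a n ∈ DSet I) ∧ StrictAnti a)
    {c : ℕ → ℝ} (hc : StrictMono c) (hc0 : ∀ n, 0 ≤ c n)
    {k : ℕ → ℕ} (hk : ∀ n, 1 ≤ k n) {f : ℕ → ℝ} (hf : ∀ n, f n ∈ DSet I) {t : ℝ}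
    (ht : ∀ n, f n + (k n : ℝ) * c n = t) : False := by
  have hc1 : 0 < c 1 := lt_of_le_of_lt (hc0 0) (hc (by norm_num : (0:ℕ) < 1))
  have htnn : 0 ≤ t := by
    have := ht 1
    have h1 := DSet_nonneg (hf 1)
    have h2 : (0:ℝ) ≤ (k 1 : ℝ) * c 1 := mul_nonneg (by positivity) (hc0 1)
    linarith
  -- bound on k for indices ≥ 1
  set K : ℕ := ⌈t / c 1⌉₊ with hK
  have hkK : ∀ n : ℕ, k (n + 1) ≤ K := by
    intro n
    have hcn : c 1 ≤ c (n + 1) := hc.monotone (by omega)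
    have hfn := DSet_nonneg (hf (n + 1))
    have hkc : (k (n+1) : ℝ) * c (n+1) ≤ t := by have := ht (n+1); linarith
    have : (k (n+1) : ℝ) ≤ t / c 1 := by
      rw [le_div_iff₀ hc1]
      calc (k (n+1) : ℝ) * c 1 ≤ (k (n+1) : ℝ) * c (n+1) := by
            apply mul_le_mul_of_nonneg_left hcn (by positivity)
        _ ≤ t := hkc
    calc k (n+1) ≤ ⌈(k (n+1) : ℝ)⌉₊ := by rw [Nat.ceil_natCast]
      _ ≤ K := Nat.ceil_le_ceil this
  obtain ⟨b, φ, hφ, hb⟩ := pigeonhole_subseq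
    (fun n => (⟨k (n + 1), Nat.lt_succ_of_le (hkK n)⟩ : Fin (K+1)))
  have hkb : ∀ n, k (φ n + 1) = (b : ℕ) := fun n => congrArg Fin.val (hb n)
  have hb1 : 1 ≤ (b : ℕ) := (hkb 0) ▸ hk (φ 0 + 1)
  have hbR : (1:ℝ) ≤ ((b : ℕ) : ℝ) := by exact_mod_cast hb1
  refine hnoD ⟨fun n => f (φ n + 1), fun n => hf _, ?_⟩
  intro p q hpq
  have h1 : f (φ p + 1) = t - ((b:ℕ):ℝ) * c (φ p + 1) := by
    have := ht (φ p + 1); rw [hkb p] at this; linarith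
  have h2 : f (φ q + 1) = t - ((b:ℕ):ℝ) * c (φ q + 1) := by
    have := ht (φ q + 1); rw [hkb q] at this; linarith
  simp only [h1, h2]
  have : c (φ p + 1) < c (φ q + 1) := hc (by have := hφ hpq; omega)
  nlinarith

/-- If `I ⊆ [0,1]` satisfies the DCC and `J₀ ⊆ [0,1]` is finite, then
`I₀ = { c ∈ I : (m-1+f+kc)/m ∈ J₀ for some k, m ≥ 1 and f ∈ D(I) }` is finite. -/
theorem dcc_acc_finite (I : Set ℝ) (hI : I ⊆ Set.Icc 0 1) (hdcc : HasDCC I)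
    (J₀ : Set ℝ) (hJ₀ : J₀ ⊆ Set.Icc 0 1) (hJfin : J₀.Finite) :
    { c ∈ I | ∃ k m : ℕ, 1 ≤ k ∧ 1 ≤ m ∧ ∃ f ∈ DSet I,
        ((m : ℝ) - 1 + f + k * c) / m ∈ J₀ }.Finite := by
  set S := { c ∈ I | ∃ k m : ℕ, 1 ≤ k ∧ 1 ≤ m ∧ ∃ f ∈ DSet I,
        ((m : ℝ) - 1 + f + k * c) / m ∈ J₀ } with hS_def
  by_contra hSfin
  have hSinf : S.Infinite := hSfin
  -- I is well-founded, hence PWO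
  have hIwf : I.IsWF := isWF_of_no_anti hdcc
  have hIpwo : I.IsPWO := hIwf.isPWO
  have hplus : (Iplus I).IsWF := (Iplus_isPWO hI hIpwo).isWF
  have hnoD := DSet_no_anti hI hplus
  -- extract a strictly increasing sequence in S
  have hSsub : S ⊆ I := fun x hx => hx.1
  obtain ⟨c, hcmono, hcS⟩ : ∃ c : ℕ → ℝ, StrictMono c ∧ ∀ n, c n ∈ S := by
    have e := hSinf.natEmbedding
    have hu : ∀ n : ℕ, ((e n : ℝ)) ∈ S := fun n => (e n).2
    obtain ⟨g, hg⟩ := (hIpwo.mono hSsub).exists_monotone_subseq (f := fun n => ((e n : ℝ)))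
      (fun n => hu n)
    refine ⟨fun n => ((e (g n) : ℝ)), ?_, fun n => hu (g n)⟩
    apply hg.strictMono_of_injective
    intro p q hpq
    have h' : (e (g p) : ℝ) = (e (g q) : ℝ) := hpq
    exact g.injective (e.injective (Subtype.val_injective h'))
  -- choose the data
  have hdata : ∀ n, ∃ k m : ℕ, 1 ≤ k ∧ 1 ≤ m ∧ ∃ f ∈ DSet I,
      ((m : ℝ) - 1 + f + k * c n) / m ∈ J₀ := fun n => (hcS n).2
  choose k m hk hm f hf hmem using hdata
  -- pigeonhole on J₀
  haveI := hJfin.to_subtype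
  obtain ⟨⟨j, hjJ⟩, φ₁, hφ₁, hj⟩ := pigeonhole_subseq
    (fun n => (⟨_, hmem n⟩ : J₀))
  have hjval : ∀ n, ((m (φ₁ n) : ℝ) - 1 + f (φ₁ n) + (k (φ₁ n)) * c (φ₁ n)) / (m (φ₁ n)) = j :=
    fun n => congrArg Subtype.val (hj n)
  -- rewrite into f + k c = 1 - m (1 - j)
  have hsum : ∀ n, f (φ₁ n) + (k (φ₁ n) : ℝ) * c (φ₁ n)
      = 1 - (m (φ₁ n) : ℝ) * (1 - j) := by
    intro n
    have hmpos : (0:ℝ) < (m (φ₁ n) : ℝ) := by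
      have := hm (φ₁ n); exact_mod_cast Nat.lt_of_lt_of_le Nat.zero_lt_one this
    have := hjval n
    field_simp at this
    linarith [this]
  have hj1 : j ≤ 1 := (hJ₀ hjJ).2
  have hc0 : ∀ n, 0 ≤ c n := fun n => (hI (hSsub (hcS n))).1
  rcases eq_or_lt_of_le hj1 with hj_eq | hj_lt
  · -- j = 1 : f + k c = 1 along φ₁
    refine final_step hI hnoD (hcmono.comp hφ₁) (fun n => hc0 (φ₁ n))
      (fun n => hk (φ₁ n)) (fun n => hf (φ₁ n)) (t := 1) ?_
    intro n
    have := hsum n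
    rw [hj_eq] at this
    simpa using this
  · -- j < 1 : bound m, pigeonhole, then apply final_step
    set N : ℕ := ⌈1 / (1 - j)⌉₊ with hN
    have hmN : ∀ n, m (φ₁ n) ≤ N := by
      intro n
      have h1j : (0:ℝ) < 1 - j := by linarith
      have hfn := DSet_nonneg (hf (φ₁ n))
      have hkc : (0:ℝ) ≤ (k (φ₁ n) : ℝ) * c (φ₁ n) :=
        mul_nonneg (by positivity) (hc0 (φ₁ n))
      have h0 : (m (φ₁ n) : ℝ) * (1 - j) ≤ 1 := by
        have := hsum n; linarith
      have : (m (φ₁ n) : ℝ) ≤ 1 / (1 - j) := by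
        rw [le_div_iff₀ h1j]; linarith
      calc m (φ₁ n) ≤ ⌈(m (φ₁ n) : ℝ)⌉₊ := by rw [Nat.ceil_natCast]
        _ ≤ N := Nat.ceil_le_ceil this
    obtain ⟨b, φ₂, hφ₂, hb⟩ := pigeonhole_subseq
      (fun n => (⟨m (φ₁ n), Nat.lt_succ_of_le (hmN n)⟩ : Fin (N+1)))
    have hmb : ∀ n, m (φ₁ (φ₂ n)) = (b : ℕ) := fun n => congrArg Fin.val (hb n)
    refine final_step hI hnoD (hcmono.comp (hφ₁.comp hφ₂)) (fun n => hc0 (φ₁ (φ₂ n)))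
      (fun n => hk (φ₁ (φ₂ n))) (fun n => hf (φ₁ (φ₂ n))) (t := 1 - ((b:ℕ):ℝ) * (1 - j)) ?_
    intro n
    have := hsum (φ₂ n)
    rw [hmb n] at this
    exact this
end
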